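/- Let N₁ = {i : c(X_i) > P} and N₂ = {i : c(X_i) ≤ P} where P = c(M)/n. Define h_i = P − c(X_i − e_{σ(i)}) for i ∈ N₁ (with e_{σ(i)} the last item i received) and h_i = P − c(X_i) for i ∈ N₂. If X is the Load Balancing allocation, then (a) h_i ≥ 0 for all i, (b) h_i ≥ h_j for all i ∈ N₁, j ∈ N₂, (c) ∑_{i∈N} h_i = ∑_{i∈N₁} c(e_{σ(i)}) ≤ |N₁|, and (d) the total subsidy equals ∑_{i∈N₂} h_i ≤ |N₁|·|N₂|/n. -/

import Mathlib

open Finset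

/-- Cost of agent `i`'s bundle under the assignment `a`. -/
noncomputable def bundleCost (n m : ℕ) (c : Fin m → ℝ) (a : Fin m → Fin n) (i : Fin n) : ℝ :=
  ∑ e ∈ Finset.univ.filter (fun e => a e = i), c e

/-- The proportional share `c(M)/n`. -/
noncomputable def propShare (n m : ℕ) (c : Fin m → ℝ) : ℝ := (∑ e, c e) / n

/-- Properties of the quantities `h_i` for the Load Balancing allocation.
`N₁ = {i : c(X_i) > P}`, `N₂ = {i : c(X_i) ≤ P}` with `P = c(M)/n`;
`σ i` is the last item agent `i` received (for `i ∈ N₁`);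
`h_i = P - c(X_i - e_{σ(i)})` for `i ∈ N₁` and `h_i = P - c(X_i)` for `i ∈ N₂`.
Then (a) `h_i ≥ 0`; (b) `h_i ≥ h_j` for `i ∈ N₁, j ∈ N₂`;
(c) `∑ h_i = ∑_{i ∈ N₁} c(e_{σ(i)}) ≤ |N₁|`;
(d) the total subsidy `∑_{i ∈ N₁} (c(X_i) - P)` equals `∑_{i ∈ N₂} h_i ≤ |N₁|·|N₂|/n`. -/
theorem loadBalancing_h_properties (n m : ℕ) (hn : 0 < n) (c : Fin m → ℝ)
    (hc : ∀ e, 0 ≤ c e ∧ c e ≤ 1)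
    (hsort : ∀ j k : Fin m, j ≤ k → c k ≤ c j)
    (a : Fin m → Fin n)
    (halg : ∀ (j : Fin m) (i : Fin n),
      ∑ e ∈ Finset.univ.filter (fun e => e < j ∧ a e = a j), c e ≤
        ∑ e ∈ Finset.univ.filter (fun e => e < j ∧ a e = i), c e)
    (σ : Fin n → Fin m)
    (hσ : ∀ i : Fin n, propShare n m c < bundleCost n m c a i →
      a (σ i) = i ∧ ∀ e : Fin m, a e = i → e ≤ σ i)
    (h : Fin n → ℝ)
    (hdef : ∀ i : Fin n, h i =
      if propShare n m c < bundleCost n m c a i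
      then propShare n m c - (bundleCost n m c a i - c (σ i))
      else propShare n m c - bundleCost n m c a i) :
    (∀ i, 0 ≤ h i) ∧
    (∀ i j : Fin n, propShare n m c < bundleCost n m c a i →
      bundleCost n m c a j ≤ propShare n m c → h j ≤ h i) ∧
    (∑ i, h i =
        ∑ i ∈ Finset.univ.filter (fun i => propShare n m c < bundleCost n m c a i), c (σ i) ∧
      ∑ i, h i ≤
        ((Finset.univ.filter (fun i => propShare n m c < bundleCost n m c a i)).card : ℝ)) ∧
    (∑ i ∈ Finset.univ.filter (fun i => propShare n m c < bundleCost n m c a i),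
        (bundleCost n m c a i - propShare n m c) =
      ∑ i ∈ Finset.univ.filter (fun i => ¬ propShare n m c < bundleCost n m c a i), h i ∧
      ∑ i ∈ Finset.univ.filter (fun i => ¬ propShare n m c < bundleCost n m c a i), h i ≤
        ((Finset.univ.filter (fun i => propShare n m c < bundleCost n m c a i)).card : ℝ) *
          ((Finset.univ.filter (fun i => ¬ propShare n m c < bundleCost n m c a i)).card : ℝ) /
            n) := by
  set P := propShare n m c with hPdef
  set B := bundleCost n m c a with hBdef
  have hn' : (0:ℝ) < n := by exact_mod_cast hn
  have hsumB : ∑ i, B i = ∑ e, c e := by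
    rw [hBdef]; unfold bundleCost; exact Finset.sum_fiberwise _ _ _
  have hnP : (n:ℝ) * P = ∑ e, c e := by
    rw [hPdef]; unfold propShare; field_simp
  have hsplit : ∀ i, P < B i →
      B i = (∑ e ∈ Finset.univ.filter (fun e => e < σ i ∧ a e = i), c e) + c (σ i) := by
    intro i hi
    obtain ⟨h1, h2⟩ := hσ i hi
    have hset : Finset.univ.filter (fun e => a e = i)
        = insert (σ i) (Finset.univ.filter (fun e => e < σ i ∧ a e = i)) := by
      ext e
      simp only [Finset.mem_filter, Finset.mem_univ, true_and, Finset.mem_insert]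
      constructor
      · intro he
        rcases lt_or_eq_of_le (h2 e he) with hlt | heq
        · exact Or.inr ⟨hlt, he⟩
        · exact Or.inl heq
      · rintro (rfl | ⟨_, he⟩)
        · exact h1
        · exact he
    have hnot : σ i ∉ Finset.univ.filter (fun e => e < σ i ∧ a e = i) := by
      simp [lt_irrefl]
    rw [hBdef]
    unfold bundleCost
    rw [hset, Finset.sum_insert hnot]
    ring
  have lemA : ∀ i, P < B i → ∀ j, B i - c (σ i) ≤ B j := by
    intro i hi j
    have h1 := (hσ i hi).1
    have halg' := halg (σ i) j
    rw [h1] at halg'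
    have hle2 : ∑ e ∈ Finset.univ.filter (fun e => e < σ i ∧ a e = j), c e ≤ B j := by
      rw [hBdef]; unfold bundleCost
      apply Finset.sum_le_sum_of_subset_of_nonneg
      · intro e he
        simp only [Finset.mem_filter, Finset.mem_univ, true_and] at he ⊢
        exact he.2
      · intro e _ _
        exact (hc e).1
    have := hsplit i hi
    linarith
  have lemB : ∃ j, B j ≤ P := by
    by_contra hcon
    push_neg at hcon
    have hne : (Finset.univ : Finset (Fin n)).Nonempty :=
      ⟨⟨0, hn⟩, Finset.mem_univ _⟩
    have hlt : ∑ _i : Fin n, P < ∑ i, B i :=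
      Finset.sum_lt_sum_of_nonempty hne (fun i _ => hcon i)
    rw [Finset.sum_const, Finset.card_univ, Fintype.card_fin, nsmul_eq_mul] at hlt
    rw [hsumB] at hlt
    linarith
  have parta : ∀ i, 0 ≤ h i := by
    intro i
    rw [hdef i]
    split_ifs with hi
    · obtain ⟨j, hj⟩ := lemB
      have := lemA i hi j
      linarith
    · push_neg at hi
      linarith
  have partb : ∀ i j : Fin n, P < B i → B j ≤ P → h j ≤ h i := by
    intro i j hi hj
    rw [hdef i, hdef j, if_pos hi, if_neg (not_lt.mpr hj)]
    have := lemA i hi j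
    linarith
  have hsumPB : ∑ i, (P - B i) = 0 := by
    rw [Finset.sum_sub_distrib, Finset.sum_const, Finset.card_univ, Fintype.card_fin,
      nsmul_eq_mul, hsumB, hnP]
    ring
  have partc1 : ∑ i, h i
      = ∑ i ∈ Finset.univ.filter (fun i => P < B i), c (σ i) := by
    have heach : ∑ i, h i = ∑ i, ((P - B i) + if P < B i then c (σ i) else 0) := by
      apply Finset.sum_congr rfl
      intro i _
      rw [hdef i]
      split_ifs <;> ring
    rw [heach, Finset.sum_add_distrib, hsumPB, zero_add, ← Finset.sum_filter]
  have partc2 : ∑ i, h i ≤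
      ((Finset.univ.filter (fun i => P < B i)).card : ℝ) := by
    rw [partc1]
    calc ∑ i ∈ Finset.univ.filter (fun i => P < B i), c (σ i)
        ≤ ∑ _i ∈ Finset.univ.filter (fun i => P < B i), (1:ℝ) :=
          Finset.sum_le_sum (fun i _ => (hc (σ i)).2)
      _ = ((Finset.univ.filter (fun i => P < B i)).card : ℝ) := by
          rw [Finset.sum_const, nsmul_eq_mul, mul_one]
  have hN2h : ∀ i ∈ Finset.univ.filter (fun i => ¬ P < B i), h i = P - B i := by
    intro i hi
    rw [Finset.mem_filter] at hi
    rw [hdef i, if_neg hi.2]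
  have partd1 : ∑ i ∈ Finset.univ.filter (fun i => P < B i), (B i - P)
      = ∑ i ∈ Finset.univ.filter (fun i => ¬ P < B i), h i := by
    have hzero : (∑ i ∈ Finset.univ.filter (fun i => P < B i), (B i - P))
        + ∑ i ∈ Finset.univ.filter (fun i => ¬ P < B i), (B i - P) = 0 := by
      rw [Finset.sum_filter_add_sum_filter_not]
      have : ∑ i, (B i - P) = - ∑ i, (P - B i) := by
        rw [← Finset.sum_neg_distrib]
        exact Finset.sum_congr rfl (fun i _ => by ring)
      rw [this, hsumPB, neg_zero]
    have hcg : ∑ i ∈ Finset.univ.filter (fun i => ¬ P < B i), h i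
        = ∑ i ∈ Finset.univ.filter (fun i => ¬ P < B i), (P - B i) :=
      Finset.sum_congr rfl (fun i hi => by rw [hN2h i hi])
    have : ∑ i ∈ Finset.univ.filter (fun i => ¬ P < B i), (P - B i)
        = - ∑ i ∈ Finset.univ.filter (fun i => ¬ P < B i), (B i - P) := by
      rw [← Finset.sum_neg_distrib]
      exact Finset.sum_congr rfl (fun i _ => by ring)
    rw [hcg, this]
    linarith
  have partd2 : ∑ i ∈ Finset.univ.filter (fun i => ¬ P < B i), h i ≤
      ((Finset.univ.filter (fun i => P < B i)).card : ℝ) *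
        ((Finset.univ.filter (fun i => ¬ P < B i)).card : ℝ) / n := by
    set N1 := Finset.univ.filter (fun i => P < B i) with hN1
    set N2 := Finset.univ.filter (fun i => ¬ P < B i) with hN2
    set S1 := ∑ i ∈ N1, h i with hS1
    set S2 := ∑ i ∈ N2, h i with hS2
    have hk : N1.card + N2.card = n := by
      rw [hN1, hN2, Finset.card_filter_add_card_filter_not, Finset.card_univ,
        Fintype.card_fin]
    have hS : S1 + S2 = ∑ i, h i := by
      rw [hS1, hS2, hN1, hN2, Finset.sum_filter_add_sum_filter_not]
    have hb1 : ∀ i ∈ N1, S2 ≤ (N2.card : ℝ) * h i := by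
      intro i hi
      rw [Finset.mem_filter] at hi
      calc S2 ≤ ∑ _j ∈ N2, h i := by
            apply Finset.sum_le_sum
            intro j hj
            rw [Finset.mem_filter] at hj
            exact partb i j hi.2 (not_lt.mp hj.2)
        _ = (N2.card : ℝ) * h i := by rw [Finset.sum_const, nsmul_eq_mul]
    have h2 : (N1.card : ℝ) * S2 ≤ (N2.card : ℝ) * S1 := by
      calc (N1.card : ℝ) * S2 = ∑ _i ∈ N1, S2 := by rw [Finset.sum_const, nsmul_eq_mul]
        _ ≤ ∑ i ∈ N1, (N2.card : ℝ) * h i := Finset.sum_le_sum hb1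
        _ = (N2.card : ℝ) * S1 := by rw [hS1, Finset.mul_sum]
    have hS1S2 : S1 + S2 ≤ (N1.card : ℝ) := by rw [hS]; exact partc2
    have hnn2 : (0:ℝ) ≤ (N2.card : ℝ) := Nat.cast_nonneg _
    rw [le_div_iff₀ hn']
    have hsum : ((N1.card : ℝ) + (N2.card : ℝ)) = (n : ℝ) := by exact_mod_cast hk
    have hmul : (N2.card : ℝ) * (S1 + S2) ≤ (N2.card : ℝ) * (N1.card : ℝ) :=
      mul_le_mul_of_nonneg_left hS1S2 hnn2
    rw [mul_add] at hmul
    have hexp : S2 * (n:ℝ) = (N1.card : ℝ) * S2 + (N2.card : ℝ) * S2 := by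
      rw [← hsum]; ring
    linarith [h2, hmul, hexp]
  exact ⟨parta, partb, ⟨partc1, partc2⟩, ⟨partd1, partd2⟩⟩
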